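/- arXiv:1510.06840 — 3 statements merged into one kernel-verified Lean document; each statement's English description precedes it below -/
import Mathlib

section
/- For every integer n and every natural number k, the quantum factorial [k]! divides the product [n]·[n−1]⋯[n−k+1] in the polynomial ring ℤ[δ]. (Consequently the quantum binomial coefficient (n choose k) is a well-defined element of ℤ[δ] for every n ∈ ℤ and k ∈ ℕ.) -/
set_option maxRecDepth 8000

section Aux

lemma qstep (f : ℤ → Polynomial ℤ)
    (hrec : ∀ m : ℤ, f m * Polynomial.X = f (m + 1) + f (m - 1)) (a b : ℤ) :
    f a * f (b+1) - f (a-1) * f b = f (a+1) * f b - f a * f (b-1) := by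
  have ha := hrec a
  have hb := hrec b
  linear_combination f b * ha - f a * hb

lemma qshift (f : ℤ → Polynomial ℤ)
    (hrec : ∀ m : ℤ, f m * Polynomial.X = f (m + 1) + f (m - 1)) (a b : ℤ) : ∀ t : ℤ,
    f a * f (b+1) - f (a-1) * f b = f (a+t) * f (b-t+1) - f (a+t-1) * f (b-t) := by
  intro t
  induction t using Int.induction_on with
  | zero => norm_num
  | succ t ih =>
      rw [show a + ((t:ℤ)+1) - 1 = a + (t:ℤ) by ring,
        show b - ((t:ℤ)+1) + 1 = b - (t:ℤ) by ring,
        show a + ((t:ℤ)+1) = a + (t:ℤ) + 1 by ring,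
        show b - ((t:ℤ)+1) = b - (t:ℤ) - 1 by ring, ih]
      exact qstep f hrec (a + (t:ℤ)) (b - (t:ℤ))
  | pred t ih =>
      rw [show b - (-(t:ℤ) - 1) + 1 = (b - -(t:ℤ) + 1) + 1 by ring,
        show a + (-(t:ℤ) - 1) - 1 = (a + -(t:ℤ) - 1) - 1 by ring,
        show b - (-(t:ℤ) - 1) = b - -(t:ℤ) + 1 by ring,
        show a + (-(t:ℤ) - 1) = a + -(t:ℤ) - 1 by ring, ih]
      have h := qstep f hrec (a + -(t:ℤ) - 1) (b - -(t:ℤ) + 1)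
      rw [show a + -(t:ℤ) - 1 + 1 = a + -(t:ℤ) by ring,
        show b - -(t:ℤ) + 1 - 1 = b - -(t:ℤ) by ring] at h
      exact h.symm

lemma qadd (f : ℤ → Polynomial ℤ) (h0 : f 0 = 0) (h1 : f 1 = 1)
    (hrec : ∀ m : ℤ, f m * Polynomial.X = f (m + 1) + f (m - 1)) (a b : ℤ) :
    f (a+b) = f a * f (b+1) - f (a-1) * f b := by
  have h := qshift f hrec a b b
  rw [show b - b + 1 = (1:ℤ) by ring, show b - b = (0:ℤ) by ring, h0, h1] at h
  rw [h]
  ring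

lemma qnegnat (f : ℤ → Polynomial ℤ) (h0 : f 0 = 0) (h1 : f 1 = 1)
    (hrec : ∀ m : ℤ, f m * Polynomial.X = f (m + 1) + f (m - 1)) :
    ∀ m : ℕ, f (-(m:ℤ)) = - f (m:ℤ) := by
  have hm1 : f (-1) = -1 := by
    have h := hrec 0
    rw [h0] at h
    simp only [zero_mul, zero_add, zero_sub] at h
    rw [h1] at h
    linear_combination -h
  intro m
  induction m using Nat.twoStepInduction with
  | zero => simp [h0]
  | one => push_cast; rw [hm1, h1]
  | more n ih ih1 =>
      have ha := hrec (-(n:ℤ)-1)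
      have hb := hrec ((n:ℤ)+1)
      rw [show -(n:ℤ)-1+1 = -(n:ℤ) by ring, show -(n:ℤ)-1-1 = -(n:ℤ)-2 by ring] at ha
      rw [show (n:ℤ)+1+1 = (n:ℤ)+2 by ring, show (n:ℤ)+1-1 = (n:ℤ) by ring] at hb
      push_cast at ih ih1 ⊢
      rw [show -((n:ℤ)+2) = -(n:ℤ)-2 by ring]
      rw [show -((n:ℤ)+1) = -(n:ℤ)-1 by ring] at ih1
      linear_combination -ha - hb + Polynomial.X * ih1 - ih

lemma qneg (f : ℤ → Polynomial ℤ) (h0 : f 0 = 0) (h1 : f 1 = 1)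
    (hrec : ∀ m : ℤ, f m * Polynomial.X = f (m + 1) + f (m - 1)) (m : ℤ) :
    f (-m) = - f m := by
  rcases le_or_gt 0 m with hm | hm
  · obtain ⟨k, rfl⟩ : ∃ k : ℕ, m = (k:ℤ) := ⟨m.toNat, by omega⟩
    exact qnegnat f h0 h1 hrec k
  · obtain ⟨k, rfl⟩ : ∃ k : ℕ, m = -(k:ℤ) := ⟨(-m).toNat, by omega⟩
    rw [neg_neg, qnegnat f h0 h1 hrec k]
    ring

lemma qaux (f : ℤ → Polynomial ℤ) (h0 : f 0 = 0) (h1 : f 1 = 1)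
    (hrec : ∀ m : ℤ, f m * Polynomial.X = f (m + 1) + f (m - 1)) (k : ℕ) : ∀ n : ℕ,
    (∏ i ∈ Finset.range k, f ((i : ℤ) + 1)) ∣ ∏ i ∈ Finset.range k, f ((n:ℤ) - (i : ℤ)) := by
  induction k with
  | zero => simp
  | succ k ihk =>
      intro n
      induction n with
      | zero =>
          have hz : ∏ i ∈ Finset.range (k+1), f ((0:ℤ) - (i:ℤ)) = 0 := by
            apply Finset.prod_eq_zero (Finset.mem_range.mpr (Nat.zero_lt_succ k))
            simpa using h0
          rw [show ((0:ℕ):ℤ) = (0:ℤ) by norm_num, hz]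
          exact dvd_zero _
      | succ n ihn =>
          by_cases hnk : n + 1 ≤ k
          · have hz : ∏ i ∈ Finset.range (k+1), f ((↑(n+1):ℤ) - (i:ℤ)) = 0 := by
              apply Finset.prod_eq_zero (Finset.mem_range.mpr (by omega : n+1 < k+1))
              rw [show ((↑(n+1):ℤ)) - ((n+1:ℕ):ℤ) = 0 by push_cast; ring]
              exact h0
            rw [hz]
            exact dvd_zero _
          · have e1 : ∏ i ∈ Finset.range (k+1), f ((↑(n+1):ℤ) - (i:ℤ))
                = (∏ i ∈ Finset.range k, f ((n:ℤ) - (i:ℤ))) * f ((n:ℤ)+1) := by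
              rw [Finset.prod_range_succ']
              congr 1
              apply Finset.prod_congr rfl
              intro i _
              congr 1
              push_cast
              ring
            have key : f ((n:ℤ)+1)
                = f ((k:ℤ)+1) * f ((n:ℤ) - k + 1) - f (k:ℤ) * f ((n:ℤ) - k) := by
              have h := qadd f h0 h1 hrec ((k:ℤ)+1) ((n:ℤ)-k)
              rw [show ((k:ℤ)+1) + ((n:ℤ)-(k:ℤ)) = (n:ℤ)+1 by ring,
                show ((k:ℤ)+1)-1 = (k:ℤ) by ring] at h
              exact h
            have e2 : (∏ i ∈ Finset.range k, f ((n:ℤ) - (i:ℤ))) * f ((n:ℤ) - (k:ℤ))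
                = ∏ i ∈ Finset.range (k+1), f ((n:ℤ) - (i:ℤ)) :=
              (Finset.prod_range_succ _ k).symm
            have hF : ∏ i ∈ Finset.range (k+1), f ((i:ℤ)+1)
                = (∏ i ∈ Finset.range k, f ((i:ℤ)+1)) * f ((k:ℤ)+1) :=
              Finset.prod_range_succ _ k
            rw [e1, key, mul_sub]
            apply dvd_sub
            · rw [hF, show (∏ i ∈ Finset.range k, f ((n:ℤ) - (i:ℤ)))
                  * (f ((k:ℤ)+1) * f ((n:ℤ) - k + 1))
                  = ((∏ i ∈ Finset.range k, f ((n:ℤ) - (i:ℤ))) * f ((k:ℤ)+1))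
                    * f ((n:ℤ) - k + 1) by ring]
              exact ((mul_dvd_mul (ihk n) dvd_rfl)).mul_right _
            · rw [show (∏ i ∈ Finset.range k, f ((n:ℤ) - (i:ℤ)))
                  * (f (k:ℤ) * f ((n:ℤ) - k))
                  = ((∏ i ∈ Finset.range k, f ((n:ℤ) - (i:ℤ))) * f ((n:ℤ) - (k:ℤ)))
                    * f (k:ℤ) by ring, e2]
              exact ihn.mul_right _

end Aux

/-!
Quantum integers: for a function `f : ℤ → Polynomial ℤ` satisfying `f 0 = 0`, `f 1 = 1`
and the recursion `f m * δ = f (m+1) + f (m-1)` (where `δ = X` is the polynomial variable),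
the quantum factorial `[k]! = f k * f (k-1) * ⋯ * f 1` divides the descending product
`f n * f (n-1) * ⋯ * f (n-k+1)` in `ℤ[δ]`, for every `n : ℤ` and `k : ℕ`.
-/
theorem qfact_dvd_descending_product
    (f : ℤ → Polynomial ℤ) (h0 : f 0 = 0) (h1 : f 1 = 1)
    (hrec : ∀ m : ℤ, f m * Polynomial.X = f (m + 1) + f (m - 1))
    (n : ℤ) (k : ℕ) :
    (∏ i ∈ Finset.range k, f ((i : ℤ) + 1)) ∣ ∏ i ∈ Finset.range k, f (n - (i : ℤ)) := by
  by_cases hn : 0 ≤ n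
  · obtain ⟨m, rfl⟩ : ∃ m : ℕ, n = (m:ℤ) := ⟨n.toNat, by omega⟩
    exact qaux f h0 h1 hrec k m
  · push_neg at hn
    have hne : ∀ i ∈ Finset.range k, f (n - (i:ℤ)) = -(f ((i:ℤ) - n)) := by
      intro i _
      rw [show n - (i:ℤ) = -((i:ℤ) - n) by ring, qneg f h0 h1 hrec]
    rw [Finset.prod_congr rfl hne]
    have e4 : ∏ i ∈ Finset.range k, -(f ((i:ℤ) - n))
        = (-1:Polynomial ℤ)^k * ∏ i ∈ Finset.range k, f ((i:ℤ) - n) := by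
      rw [show ((-1:Polynomial ℤ))^k = ∏ _i ∈ Finset.range k, (-1:Polynomial ℤ) by
          rw [Finset.prod_const, Finset.card_range], ← Finset.prod_mul_distrib]
      exact Finset.prod_congr rfl fun i _ => (neg_one_mul _).symm
    rw [e4]
    set m : ℕ := ((k:ℤ) - 1 - n).toNat with hm
    have hmz : (m:ℤ) = (k:ℤ) - 1 - n := by omega
    have e3 : ∏ i ∈ Finset.range k, f ((i:ℤ) - n) = ∏ i ∈ Finset.range k, f ((m:ℤ) - (i:ℤ)) := by
      rw [← Finset.prod_range_reflect (fun j => f ((j:ℤ) - n)) k]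
      apply Finset.prod_congr rfl
      intro j hj
      have hj' := Finset.mem_range.mp hj
      congr 1
      have : ((k - 1 - j : ℕ) : ℤ) = (k:ℤ) - 1 - j := by omega
      rw [this]
      omega
    rw [e3]
    exact (qaux f h0 h1 hrec k m).mul_left _
end

section
/- For all natural numbers 0 ≤ k ≤ m there exists a polynomial p ∈ ℤ[X] such that, in the Laurent polynomial ring ℤ[q,q⁻¹], p(q + q⁻¹) · [k]_q! = [m]_q·[m−1]_q⋯[m−k+1]_q. In other words, the balanced quantum binomial coefficient (m choose k)_q exists in ℤ[q,q⁻¹] and is a polynomial with integer coefficients in δ = q + q⁻¹. -/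
/-- The balanced quantum integer `[m]_q = q^{m-1} + q^{m-3} + ⋯ + q^{1-m}` in `ℤ[q,q⁻¹]`,
with `[0]_q = 0`. -/
noncomputable def qnumL (m : ℕ) : LaurentPolynomial ℤ :=
  ∑ i ∈ Finset.range m, LaurentPolynomial.T ((m : ℤ) - 1 - 2 * (i : ℤ))

/-- The balanced quantum factorial `[k]_q! = [k]_q · [k-1]_q ⋯ [1]_q`, with `[0]_q! = 1`. -/
noncomputable def qfactL (k : ℕ) : LaurentPolynomial ℤ :=
  ∏ i ∈ Finset.range k, qnumL (i + 1)

section Aux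

open LaurentPolynomial

lemma invert_qnumL (m : ℕ) : invert (qnumL m) = qnumL m := by
  unfold qnumL
  rw [map_sum]
  simp only [invert_T]
  rw [← Finset.sum_range_reflect]
  apply Finset.sum_congr rfl
  intro i hi
  simp only [Finset.mem_range] at hi
  congr 1
  push_cast [Nat.cast_sub (by omega : i ≤ m - 1)]
  omega

lemma invert_qfactL (k : ℕ) : invert (qfactL k) = qfactL k := by
  unfold qfactL
  rw [map_prod]
  simp [invert_qnumL]

lemma qnumL_ne_zero (m : ℕ) (hm : 0 < m) : qnumL m ≠ 0 := by
  intro h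
  have h1 : (qnumL m).coeff ((m : ℤ) - 1) = 0 := by rw [h]; rfl
  unfold qnumL at h1
  rw [AddMonoidAlgebra.coeff_sum, Finset.sum_apply'] at h1
  simp only [T_apply] at h1
  rw [Finset.sum_eq_single 0] at h1
  · simp at h1
  · intro b hb hb0
    rw [if_neg]
    intro hc
    apply hb0
    omega
  · intro h0
    simp [hm] at h0

lemma qfactL_ne_zero (k : ℕ) : qfactL k ≠ 0 := by
  unfold qfactL
  apply Finset.prod_ne_zero_iff.mpr
  intro i _
  exact qnumL_ne_zero _ (Nat.succ_pos i)

lemma qnumL_add (a b : ℕ) :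
    qnumL (a + b) = T (b : ℤ) * qnumL a + T (-(a : ℤ)) * qnumL b := by
  unfold qnumL
  rw [Finset.mul_sum, Finset.mul_sum, Nat.cast_add, Finset.sum_range_add]
  congr 1
  · apply Finset.sum_congr rfl
    intro i _
    rw [← T_add]
    ring_nf
  · apply Finset.sum_congr rfl
    intro i _
    rw [← T_add]
    push_cast
    ring_nf

lemma qfact_dvd (m : ℕ) : ∀ k ≤ m, qfactL k ∣ ∏ i ∈ Finset.range k, qnumL (m - i) := by
  induction m with
  | zero =>
    intro k hk
    interval_cases k
    simp [qfactL]
  | succ m IH =>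
    intro k hk
    match k with
    | 0 => simp [qfactL]
    | (k' + 1) =>
      by_cases hkm : k' + 1 ≤ m
      · have hsplit : ∏ i ∈ Finset.range (k' + 1), qnumL (m + 1 - i)
            = qnumL (m + 1) * ∏ i ∈ Finset.range k', qnumL (m - i) := by
          rw [Finset.prod_range_succ']
          rw [mul_comm]
          congr 1
          apply Finset.prod_congr rfl
          intro i _
          congr 1
          omega
        have hq : qnumL (m + 1) = T ((m + 1 - (k' + 1) : ℕ) : ℤ) * qnumL (k' + 1)
            + T (-((k' + 1 : ℕ) : ℤ)) * qnumL (m + 1 - (k' + 1)) := by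
          conv_lhs => rw [show m + 1 = (k' + 1) + (m + 1 - (k' + 1)) by omega]
          exact qnumL_add _ _
        rw [hsplit, hq, add_mul]
        apply dvd_add
        · have h1 : qfactL k' ∣ ∏ i ∈ Finset.range k', qnumL (m - i) := IH k' (by omega)
          obtain ⟨c, hc⟩ := h1
          refine ⟨T ((m + 1 - (k' + 1) : ℕ) : ℤ) * c, ?_⟩
          rw [hc]
          have hf : qfactL (k' + 1) = qfactL k' * qnumL (k' + 1) := Finset.prod_range_succ _ _
          rw [hf]; ring
        · have h2 : qfactL (k' + 1) ∣ ∏ i ∈ Finset.range (k' + 1), qnumL (m - i) :=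
            IH (k' + 1) hkm
          have heq : qnumL (m + 1 - (k' + 1)) * ∏ i ∈ Finset.range k', qnumL (m - i)
              = ∏ i ∈ Finset.range (k' + 1), qnumL (m - i) := by
            rw [Finset.prod_range_succ, mul_comm]
            congr 2
            omega
          rw [mul_assoc, heq]
          exact Dvd.dvd.mul_left h2 _
      · obtain rfl : m = k' := by omega
        have heq : ∏ i ∈ Finset.range (m + 1), qnumL (m + 1 - i) = qfactL (m + 1) := by
          unfold qfactL
          rw [← Finset.prod_range_reflect]
          apply Finset.prod_congr rfl
          intro i hi
          simp only [Finset.mem_range] at hi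
          congr 1
          omega
        rw [heq]

lemma delta_mul (a : ℤ) : (T 1 + T (-1) : LaurentPolynomial ℤ) * (T a + T (-a))
    = T (a+1) + T (-(a+1)) + (T (a-1) + T (-(a-1))) := by
  rw [mul_add, add_mul, add_mul, ← T_add, ← T_add, ← T_add, ← T_add]
  rw [show (1:ℤ)+a = a+1 from by ring, show (-1:ℤ)+a = a-1 from by ring,
      show (1:ℤ)+ -a = -(a-1) from by ring, show (-1:ℤ)+ -a = -(a+1) from by ring]
  ring

lemma cheb (n : ℕ) : ∃ p : Polynomial ℤ,
    Polynomial.aeval (T 1 + T (-1) : LaurentPolynomial ℤ) p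
      = T ((n : ℤ) + 1) + T (-((n : ℤ) + 1)) := by
  induction n using Nat.strong_induction_on with
  | _ n IH =>
    match n with
    | 0 => exact ⟨Polynomial.X, by simp⟩
    | 1 =>
      refine ⟨Polynomial.X ^ 2 - 2, ?_⟩
      simp only [map_sub, map_pow, Polynomial.aeval_X, map_ofNat]
      rw [sq, delta_mul 1]
      norm_num
    | (n + 2) =>
      obtain ⟨p1, hp1⟩ := IH (n + 1) (by omega)
      obtain ⟨p0, hp0⟩ := IH n (by omega)
      refine ⟨Polynomial.X * p1 - p0, ?_⟩
      rw [map_sub, map_mul, Polynomial.aeval_X, hp1, hp0]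
      push_cast
      rw [show ((n:ℤ) + 1 + 1) = (n + 2 : ℤ) from by ring, delta_mul]
      ring_nf

lemma symm_aux : ∀ (N : ℕ) (f : LaurentPolynomial ℤ),
    (∀ n : ℤ, f.coeff n ≠ 0 → -(N:ℤ) ≤ n ∧ n ≤ N) → invert f = f →
    ∃ p : Polynomial ℤ, Polynomial.aeval (T 1 + T (-1) : LaurentPolynomial ℤ) p = f := by
  intro N
  induction N with
  | zero =>
    intro f hsupp _
    refine ⟨Polynomial.C (f.coeff 0), ?_⟩
    rw [Polynomial.aeval_C, ← C_eq_algebraMap]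
    ext n
    rw [C_apply]
    by_cases h : n = 0
    · simp [h]
    · rw [if_neg h]
      by_contra h0
      have := hsupp n (fun hc => h0 hc.symm)
      omega
  | succ N IH =>
    intro f hsupp hsym
    set c : ℤ := f.coeff ((N:ℤ) + 1) with hc
    set g : LaurentPolynomial ℤ := f - C c * (T ((N:ℤ)+1) + T (-((N:ℤ)+1))) with hgdef
    have hfsym : ∀ n : ℤ, f.coeff (-n) = f.coeff n := by
      intro n
      conv_rhs => rw [← hsym]
      rw [invert_apply]
    have hgapp : ∀ n : ℤ, g.coeff n = f.coeff n - ((if (N:ℤ)+1 = n then c else 0)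
        + (if -((N:ℤ)+1) = n then c else 0)) := by
      intro n
      rw [hgdef]
      rw [mul_add, ← single_eq_C_mul_T, ← single_eq_C_mul_T]
      rw [AddMonoidAlgebra.coeff_sub, AddMonoidAlgebra.coeff_add, AddMonoidAlgebra.coeff_single, AddMonoidAlgebra.coeff_single, Finsupp.sub_apply, Finsupp.add_apply, Finsupp.single_apply, Finsupp.single_apply]
    have hgsupp : ∀ n : ℤ, g.coeff n ≠ 0 → -(N:ℤ) ≤ n ∧ n ≤ N := by
      intro n hn
      by_contra hout
      apply hn
      rw [hgapp]
      rcases lt_or_ge ((N:ℤ)) n with h1 | h1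
      · rcases eq_or_lt_of_le (by omega : (N:ℤ)+1 ≤ n) with h2 | h2
        · rw [if_pos h2, if_neg (by omega), ← h2, ← hc]; ring
        · have : f.coeff n = 0 := by
            by_contra h3
            have := hsupp n h3
            omega
          rw [this, if_neg (by omega), if_neg (by omega)]; ring
      · have h1' : n < -(N:ℤ) := by omega
        rcases eq_or_lt_of_le (by omega : n ≤ -((N:ℤ)+1)) with h2 | h2
        · rw [if_neg (by omega), if_pos (by omega : -((N:ℤ)+1) = n)]
          rw [show n = -((N:ℤ)+1) from h2]
          rw [hfsym ((N:ℤ)+1)]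
          ring
        · have : f.coeff n = 0 := by
            by_contra h3
            have := hsupp n h3
            omega
          rw [this, if_neg (by omega), if_neg (by omega)]; ring
    have hgsym : invert g = g := by
      rw [hgdef, map_sub, map_mul, invert_C, map_add, invert_T, invert_T, hsym, neg_neg,
        add_comm (T (-((N:ℤ)+1)))]
    obtain ⟨pg, hpg⟩ := IH g hgsupp hgsym
    obtain ⟨pc, hpc⟩ := cheb N
    refine ⟨pg + Polynomial.C c * pc, ?_⟩
    rw [map_add, map_mul, Polynomial.aeval_C, hpg, hpc, ← C_eq_algebraMap, hgdef]
    ring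

lemma symm_poly (f : LaurentPolynomial ℤ) (hsym : invert f = f) :
    ∃ p : Polynomial ℤ, Polynomial.aeval (T 1 + T (-1) : LaurentPolynomial ℤ) p = f := by
  apply symm_aux (f.coeff.support.sup (fun n => n.natAbs)) f _ hsym
  intro n hn
  have hmem : n ∈ f.coeff.support := Finsupp.mem_support_iff.mpr hn
  have h2 : n.natAbs ≤ f.coeff.support.sup (fun n => n.natAbs) :=
    Finset.le_sup (f := fun n : ℤ => n.natAbs) hmem
  omega

end Aux

/-- For `0 ≤ k ≤ m` there is a polynomial `p ∈ ℤ[X]` with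
`p(q + q⁻¹) · [k]_q! = [m]_q · [m-1]_q ⋯ [m-k+1]_q` in `ℤ[q,q⁻¹]`;
i.e. the balanced quantum binomial `(m choose k)_q` exists and is an integer polynomial
in `δ = q + q⁻¹`. -/
theorem qbinom_is_polynomial_in_delta (m k : ℕ) (hk : k ≤ m) :
    ∃ p : Polynomial ℤ,
      Polynomial.aeval (LaurentPolynomial.T 1 + LaurentPolynomial.T (-1)) p * qfactL k
        = ∏ i ∈ Finset.range k, qnumL (m - i) := by
  obtain ⟨u, hu⟩ := qfact_dvd m k hk
  have husym : LaurentPolynomial.invert u = u := by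
    have h1 : LaurentPolynomial.invert (∏ i ∈ Finset.range k, qnumL (m - i))
        = ∏ i ∈ Finset.range k, qnumL (m - i) := by
      rw [map_prod]
      simp [invert_qnumL]
    rw [hu, map_mul, invert_qfactL] at h1
    exact mul_left_cancel₀ (qfactL_ne_zero k) h1
  obtain ⟨p, hp⟩ := symm_poly u husym
  exact ⟨p, by rw [hp, hu, mul_comm]⟩
end

section
/- Let w = (w_1,…,w_d) with each w_j ∈ {1,…,n−1}, and let N : V_{w_1} ⊗ ⋯ ⊗ V_{w_d} → V_{y_1} ⊗ ⋯ ⊗ V_{y_d} be any composition of maps each of which is of the form id ⊗ ⋯ ⊗ (neutral rung map on two adjacent tensor factors) ⊗ ⋯ ⊗ id, so that (y_1,…,y_d) is the corresponding permutation of (w_1,…,w_d). Then: (1) N(x_{[1,w_1]} ⊗ ⋯ ⊗ x_{[1,w_d]}) = ε q^z · x_{[1,y_1]} ⊗ ⋯ ⊗ x_{[1,y_d]} for some sign ε ∈ {±1} and z ∈ ℤ; and (2) for every basis element x_{S_1} ⊗ ⋯ ⊗ x_{S_d} of the source with (S_1,…,S_d) ≠ ([1,w_1],…,[1,w_d]),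 the coefficient of x_{[1,y_1]} ⊗ ⋯ ⊗ x_{[1,y_d]} in N(x_{S_1} ⊗ ⋯ ⊗ x_{S_d}) is zero. -/
noncomputable section

/-- The base ring `R = ℤ[q,q⁻¹]`. -/
abbrev R := LaurentPolynomial ℤ

/-- Index type for the basis of the "big" free module `⊕_p V_p`: all subsets of `{1,…,n}`. -/
abbrev F (n : ℕ) := Finset (Fin n)

/-- The free `R`-module `⊕_p V_p` with basis `x_S` for `S ⊆ {1,…,n}`; the submodule spanned
by the `x_S` with `|S| = p` is `V_p`. -/
abbrev Big (n : ℕ) := F n →₀ R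

/-- The model of `(⊕ V_p) ⊗ (⊕ V_r)`, free on pairs of subsets. -/
abbrev Big2 (n : ℕ) := (F n × F n) →₀ R

/-- The model of a `d`-fold tensor product, free on `d`-tuples of subsets. -/
abbrev BigD (n d : ℕ) := (Fin d → F n) →₀ R

/-- `ℓ(S,T) = #{(i,j) ∈ S × T : i < j}`. -/
def ell {n : ℕ} (S T : F n) : ℕ := ((S ×ˢ T).filter (fun p => p.1 < p.2)).card

/-- `(−q)^z` for `z : ℤ`. -/
def negqpow (z : ℤ) : R := (-1 : R) ^ z.natAbs * LaurentPolynomial.T z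

/-- The merge map `M` : `x_S ⊗ x_T ↦ (−q)^{ℓ(S,T)} x_{S ∪ T}` if `S ∩ T = ∅`, else `0`.
On the graded piece `V_a ⊗ V_b` this is `M_{a,b}`. -/
def mergeMap (n : ℕ) : Big2 n →ₗ[R] Big n :=
  Finsupp.lift (Big n) R (F n × F n)
    (fun p => if Disjoint p.1 p.2
      then Finsupp.single (p.1 ∪ p.2) (negqpow (ell p.1 p.2)) else 0)

/-- The split map taking the second tensor factor of size `c`:
`x_S ↦ (−1)^{(|S|−c)·c} Σ_{T ⊆ S, |T| = |S|−c} (−q)^{−ℓ(S∖T,T)} x_T ⊗ x_{S∖T}`.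
On the graded piece `V_{a+c}` this is `M'_{a,c}`. -/
def splitR (n c : ℕ) : Big n →ₗ[R] Big2 n :=
  Finsupp.lift (Big2 n) R (F n)
    (fun S => ((-1 : R) ^ ((S.card - c) * c)) •
      ∑ T ∈ S.powersetCard (S.card - c),
        Finsupp.single (T, S \ T) (negqpow (-(ell (S \ T) T : ℤ))))

/-- The split map taking the first tensor factor of size `c`:
`x_S ↦ (−1)^{c·(|S|−c)} Σ_{T ⊆ S, |T| = c} (−q)^{−ℓ(S∖T,T)} x_T ⊗ x_{S∖T}`.
On the graded piece `V_{c+b}` this is `M'_{c,b}`. -/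
def splitL (n c : ℕ) : Big n →ₗ[R] Big2 n :=
  Finsupp.lift (Big2 n) R (F n)
    (fun S => ((-1 : R) ^ (c * (S.card - c))) •
      ∑ T ∈ S.powersetCard c,
        Finsupp.single (T, S \ T) (negqpow (-(ell (S \ T) T : ℤ))))

/-- `f ⊗ id` in the free-module model. -/
def tensorId {α α' β : Type} (f : (α →₀ R) →ₗ[R] (α' →₀ R)) :
    ((α × β) →₀ R) →ₗ[R] ((α' × β) →₀ R) :=
  Finsupp.lift _ R _
    (fun p => Finsupp.mapDomain (fun a => (a, p.2)) (f (Finsupp.single p.1 1)))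

/-- `id ⊗ f` in the free-module model. -/
def idTensor {α β β' : Type} (f : (β →₀ R) →ₗ[R] (β' →₀ R)) :
    ((α × β) →₀ R) →ₗ[R] ((α × β') →₀ R) :=
  Finsupp.lift _ R _
    (fun p => Finsupp.mapDomain (fun b => (p.1, b)) (f (Finsupp.single p.2 1)))

/-- The canonical associator of the free-module model. -/
def assocMap (α β γ : Type) : (((α × β) × γ) →₀ R) ≃ₗ[R] ((α × (β × γ)) →₀ R) :=
  Finsupp.domLCongr (Equiv.prodAssoc α β γ)

/-- The northeast rung map `R^{NE}_c = (id ⊗ M_{c,r}) ∘ (M'_{p−c,c} ⊗ id) :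
V_p ⊗ V_r → V_{p−c} ⊗ V_{r+c}` (assembled over all graded pieces). -/
def rungNE (n c : ℕ) : Big2 n →ₗ[R] Big2 n :=
  (idTensor (mergeMap n)) ∘ₗ (assocMap (F n) (F n) (F n)).toLinearMap
    ∘ₗ (tensorId (splitR n c))

/-- The northwest rung map `R^{NW}_c = (M_{p,c} ⊗ id) ∘ (id ⊗ M'_{c,r−c}) :
V_p ⊗ V_r → V_{p+c} ⊗ V_{r−c}` (assembled over all graded pieces). -/
def rungNW (n c : ℕ) : Big2 n →ₗ[R] Big2 n :=
  (tensorId (mergeMap n)) ∘ₗ (assocMap (F n) (F n) (F n)).symm.toLinearMap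
    ∘ₗ (idTensor (splitL n c))

/-- Apply a two-factor map `g` at the adjacent tensor positions `i, i+1` of a `d`-fold
tensor product: `id^{⊗i} ⊗ g ⊗ id^{⊗(d−i−2)}` (the identity if `i+1 ≥ d`). -/
def atPos (n d i : ℕ) (g : Big2 n →ₗ[R] Big2 n) : BigD n d →ₗ[R] BigD n d :=
  if h : i + 1 < d then
    Finsupp.lift (BigD n d) R (Fin d → F n)
      (fun f => Finsupp.mapDomain
        (fun p => Function.update (Function.update f ⟨i, Nat.lt_of_succ_lt h⟩ p.1) ⟨i + 1, h⟩ p.2)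
        (g (Finsupp.single (f ⟨i, Nat.lt_of_succ_lt h⟩, f ⟨i + 1, h⟩) 1)))
  else LinearMap.id

/-- The subset of `Fin n` corresponding (0-based) to the 1-based interval
`(a, b] ⊆ {1,…,n}` (so `[1,m]` is `ico n 0 m`). -/
def ico (n a b : ℕ) : F n :=
  Finset.univ.filter (fun j => a ≤ (j : ℕ) ∧ (j : ℕ) < b)

end

noncomputable section

/-- The neutral rung map on two adjacent tensor factors: on `V_p ⊗ V_r` it is
`R^{NE}_{p−r}` if `p > r`, `R^{NW}_{r−p}` if `p < r`, and the identity if `p = r`. -/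
def neutralRung (n : ℕ) : Big2 n →ₗ[R] Big2 n :=
  Finsupp.lift (Big2 n) R (F n × F n)
    (fun p =>
      if p.1.card = p.2.card then Finsupp.single p 1
      else if p.2.card < p.1.card then
        rungNE n (p.1.card - p.2.card) (Finsupp.single p 1)
      else
        rungNW n (p.2.card - p.1.card) (Finsupp.single p 1))

/-- The transposition `(i, i+1)` of `Fin d` (the identity if `i+1 ≥ d`). -/
def swapPerm (d i : ℕ) : Equiv.Perm (Fin d) :=
  if h : i + 1 < d then Equiv.swap ⟨i, Nat.lt_of_succ_lt h⟩ ⟨i + 1, h⟩ else 1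

end

open Finsupp LaurentPolynomial

section Lemmas
variable {n : ℕ}

lemma lift_single {X M : Type*} [AddCommMonoid M] [Module R M] (f : X → M) (a : X) :
    Finsupp.lift M R X f (Finsupp.single a 1) = f a := by
  rw [Finsupp.lift_apply, Finsupp.sum_single_index] <;> simp

lemma mergeMap_single (S T : F n) :
    mergeMap n (Finsupp.single (S, T) 1)
      = if Disjoint S T then Finsupp.single (S ∪ T) (negqpow (ell S T)) else 0 := by
  rw [mergeMap, lift_single]

lemma splitR_single (c : ℕ) (S : F n) :
    splitR n c (Finsupp.single S 1)
      = ((-1 : R) ^ ((S.card - c) * c)) •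
        ∑ T ∈ S.powersetCard (S.card - c),
          Finsupp.single (T, S \ T) (negqpow (-(ell (S \ T) T : ℤ))) := by
  rw [splitR, lift_single]

lemma splitL_single (c : ℕ) (S : F n) :
    splitL n c (Finsupp.single S 1)
      = ((-1 : R) ^ (c * (S.card - c))) •
        ∑ T ∈ S.powersetCard c,
          Finsupp.single (T, S \ T) (negqpow (-(ell (S \ T) T : ℤ))) := by
  rw [splitL, lift_single]

lemma tensorId_single {α α' β : Type} (f : (α →₀ R) →ₗ[R] (α' →₀ R)) (a : α) (b : β) :
    tensorId f (Finsupp.single (a, b) 1)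
      = Finsupp.mapDomain (fun x => (x, b)) (f (Finsupp.single a 1)) := by
  rw [tensorId, lift_single]

lemma idTensor_single {α β β' : Type} (f : (β →₀ R) →ₗ[R] (β' →₀ R)) (a : α) (b : β) :
    idTensor f (Finsupp.single (a, b) 1)
      = Finsupp.mapDomain (fun x => (a, x)) (f (Finsupp.single b 1)) := by
  rw [idTensor, lift_single]

lemma neutralRung_single (S T : F n) :
    neutralRung n (Finsupp.single (S, T) 1)
      = if S.card = T.card then Finsupp.single (S, T) 1
        else if T.card < S.card then rungNE n (S.card - T.card) (Finsupp.single (S, T) 1)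
        else rungNW n (T.card - S.card) (Finsupp.single (S, T) 1) := by
  rw [neutralRung, lift_single]

end Lemmas

section Lemmas2
open Finsupp LaurentPolynomial
variable {n : ℕ}

lemma rungNE_single (c : ℕ) (S T : F n) :
    rungNE n c (Finsupp.single (S, T) 1)
      = ((-1 : R) ^ ((S.card - c) * c)) •
        ∑ A ∈ S.powersetCard (S.card - c),
          (if Disjoint (S \ A) T
            then Finsupp.single (A, (S \ A) ∪ T)
              (negqpow (-(ell (S \ A) A : ℤ)) * negqpow (ell (S \ A) T))
            else 0) := by
  rw [rungNE]
  simp only [LinearMap.comp_apply, LinearEquiv.coe_toLinearMap]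
  rw [tensorId_single, splitR_single]
  rw [Finsupp.mapDomain_smul, map_smul, map_smul, Finsupp.mapDomain_finset_sum]
  rw [map_sum, map_sum]
  congr 1
  refine Finset.sum_congr rfl (fun A hA => ?_)
  rw [Finsupp.mapDomain_single]
  have : (Finsupp.single ((A, S \ A), T) (negqpow (-(ell (S \ A) A : ℤ))))
      = negqpow (-(ell (S \ A) A : ℤ)) • (Finsupp.single ((A, S \ A), T) (1 : R)) := by
    rw [Finsupp.smul_single, smul_eq_mul, mul_one]
  rw [this, map_smul, map_smul]
  simp only [assocMap, LinearEquiv.coe_coe, Finsupp.domLCongr_single, Equiv.prodAssoc_apply,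
    idTensor_single, mergeMap_single]
  split_ifs with hdisj
  · simp [Finsupp.mapDomain_single, Finsupp.smul_single, smul_eq_mul]
  · simp

lemma rungNW_single (c : ℕ) (S T : F n) :
    rungNW n c (Finsupp.single (S, T) 1)
      = ((-1 : R) ^ (c * (T.card - c))) •
        ∑ B ∈ T.powersetCard c,
          (if Disjoint S B
            then Finsupp.single (S ∪ B, T \ B)
              (negqpow (-(ell (T \ B) B : ℤ)) * negqpow (ell S B))
            else 0) := by
  rw [rungNW]
  simp only [LinearMap.comp_apply, LinearEquiv.coe_toLinearMap]
  rw [idTensor_single, splitL_single]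
  rw [Finsupp.mapDomain_smul, map_smul, map_smul, Finsupp.mapDomain_finset_sum]
  rw [map_sum, map_sum]
  congr 1
  refine Finset.sum_congr rfl (fun B hB => ?_)
  rw [Finsupp.mapDomain_single]
  have : (Finsupp.single (S, (B, T \ B)) (negqpow (-(ell (T \ B) B : ℤ))))
      = negqpow (-(ell (T \ B) B : ℤ)) • (Finsupp.single (S, (B, T \ B)) (1 : R)) := by
    rw [Finsupp.smul_single, smul_eq_mul, mul_one]
  rw [this, map_smul, map_smul]
  simp only [assocMap, Finsupp.domLCongr_symm, LinearEquiv.coe_coe, Finsupp.domLCongr_single,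
    Equiv.prodAssoc_symm_apply, tensorId_single, mergeMap_single]
  split_ifs with hdisj
  · simp [Finsupp.mapDomain_single, Finsupp.smul_single, smul_eq_mul, mul_comm]
  · simp

end Lemmas2

section Lemmas3
open Finsupp LaurentPolynomial
variable {n : ℕ}

lemma mem_ico_iff {b : ℕ} {j : Fin n} : j ∈ ico n 0 b ↔ (j : ℕ) < b := by
  simp [ico]

lemma ico_card {b : ℕ} (hb : b ≤ n) : (ico n 0 b).card = b := by
  classical
  rw [Finset.card_eq_of_bijective (fun i hi => ⟨i, lt_of_lt_of_le hi hb⟩)]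
  · intro j hj
    exact ⟨(j : ℕ), mem_ico_iff.mp hj, rfl⟩
  · intro i hi
    exact mem_ico_iff.mpr hi
  · intro i j hi hj h
    exact congrArg Fin.val h

lemma ico_subset {a b : ℕ} (h : a ≤ b) : ico n 0 a ⊆ ico n 0 b := by
  intro j hj
  exact mem_ico_iff.mpr (lt_of_lt_of_le (mem_ico_iff.mp hj) h)

/-- `±q^z` monomials. -/
def IsUM (u : R) : Prop := ∃ ε z : ℤ, (ε = 1 ∨ ε = -1) ∧ u = LaurentPolynomial.C ε * LaurentPolynomial.T z

lemma isUM_one : IsUM 1 := ⟨1, 0, Or.inl rfl, by simp⟩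

lemma isUM_mul {u v : R} (hu : IsUM u) (hv : IsUM v) : IsUM (u * v) := by
  obtain ⟨e1, z1, h1, rfl⟩ := hu
  obtain ⟨e2, z2, h2, rfl⟩ := hv
  refine ⟨e1 * e2, z1 + z2, ?_, ?_⟩
  · rcases h1 with rfl | rfl <;> rcases h2 with rfl | rfl <;> simp
  · rw [LaurentPolynomial.T_add, map_mul]; ring

lemma isUM_negqpow (z : ℤ) : IsUM (negqpow z) := by
  refine ⟨(-1) ^ z.natAbs, z, ?_, ?_⟩
  · rcases Nat.even_or_odd z.natAbs with h | h
    · exact Or.inl h.neg_one_pow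
    · exact Or.inr h.neg_one_pow
  · rw [negqpow, map_pow, map_neg, map_one]

lemma isUM_neg_one_pow (m : ℕ) : IsUM ((-1 : R) ^ m) := by
  refine ⟨(-1) ^ m, 0, ?_, ?_⟩
  · rcases Nat.even_or_odd m with h | h
    · exact Or.inl h.neg_one_pow
    · exact Or.inr h.neg_one_pow
  · rw [map_pow, map_neg, map_one]; simp

end Lemmas3

section Lemmas4
open Finsupp LaurentPolynomial
variable {n : ℕ}

lemma neutralRung_top (a b : ℕ) (ha : a ≤ n) (hb : b ≤ n) :
    ∃ u : R, IsUM u ∧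
      neutralRung n (Finsupp.single (ico n 0 a, ico n 0 b) 1)
        = Finsupp.single (ico n 0 b, ico n 0 a) u := by
  classical
  rw [neutralRung_single, ico_card ha, ico_card hb]
  rcases lt_trichotomy a b with hab | rfl | hab
  · -- a < b : NW case
    rw [if_neg (Nat.ne_of_lt hab), if_neg (not_lt_of_gt hab)]
    rw [rungNW_single, ico_card hb]
    set c := b - a with hc
    have hsub : ico n 0 a ⊆ ico n 0 b := ico_subset (le_of_lt hab)
    have hBmem : ico n 0 b \ ico n 0 a ∈ (ico n 0 b).powersetCard c := by
      rw [Finset.mem_powersetCard]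
      exact ⟨Finset.sdiff_subset, by
        rw [Finset.card_sdiff_of_subset hsub, ico_card hb, ico_card ha]⟩
    rw [Finset.sum_eq_single_of_mem _ hBmem]
    · rw [if_pos Finset.disjoint_sdiff]
      have hk : ico n 0 b \ (ico n 0 b \ ico n 0 a) = ico n 0 a :=
        Finset.sdiff_sdiff_eq_self hsub
      rw [Finset.union_sdiff_of_subset hsub, hk]
      rw [Finsupp.smul_single]
      exact ⟨_, isUM_mul (isUM_neg_one_pow _) (isUM_mul (isUM_negqpow _) (isUM_negqpow _)), rfl⟩
    · intro B hB hBne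
      rw [if_neg]
      intro hdisj
      apply hBne
      rw [Finset.mem_powersetCard] at hB
      apply Finset.eq_of_subset_of_card_le
      · intro j hj
        rw [Finset.mem_sdiff]
        exact ⟨hB.1 hj, fun hj' => (Finset.disjoint_right.mp hdisj hj) hj'⟩
      · rw [Finset.card_sdiff_of_subset hsub, ico_card hb, ico_card ha, hB.2]
  · -- a = b
    rw [if_pos rfl]
    exact ⟨1, isUM_one, rfl⟩
  · -- b < a : NE case
    rw [if_neg (Nat.ne_of_gt hab), if_pos hab]
    rw [rungNE_single, ico_card ha]
    have hsub : ico n 0 b ⊆ ico n 0 a := ico_subset (le_of_lt hab)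
    have hac : a - (a - b) = b := Nat.sub_sub_self (le_of_lt hab)
    have hAmem : ico n 0 b ∈ (ico n 0 a).powersetCard (a - (a - b)) := by
      rw [Finset.mem_powersetCard, hac]
      exact ⟨hsub, ico_card hb⟩
    rw [Finset.sum_eq_single_of_mem _ hAmem]
    · rw [if_pos Finset.sdiff_disjoint, Finset.sdiff_union_of_subset hsub]
      rw [Finsupp.smul_single]
      exact ⟨_, isUM_mul (isUM_neg_one_pow _) (isUM_mul (isUM_negqpow _) (isUM_negqpow _)), rfl⟩
    · intro A hA hAne
      rw [if_neg]
      intro hdisj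
      apply hAne
      rw [Finset.mem_powersetCard, hac] at hA
      refine (Finset.eq_of_subset_of_card_le ?_ ?_).symm
      · intro j hj
        by_contra hjA
        exact Finset.disjoint_left.mp hdisj (Finset.mem_sdiff.mpr ⟨hsub hj, hjA⟩) hj
      · rw [hA.2, ico_card hb]

end Lemmas4

section Lemmas5
open Finsupp LaurentPolynomial
variable {n : ℕ}

lemma neutralRung_coeff_zero (a b : ℕ) (ha : a ≤ n) (hb : b ≤ n) (S T : F n)
    (hne : ¬(S = ico n 0 a ∧ T = ico n 0 b)) :
    (neutralRung n (Finsupp.single (S, T) 1)) (ico n 0 b, ico n 0 a) = 0 := by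
  classical
  rw [neutralRung_single]
  rcases lt_trichotomy S.card T.card with hc | hc | hc
  · -- NW case
    rw [if_neg (Nat.ne_of_lt hc), if_neg (not_lt_of_gt hc), rungNW_single]
    rw [Finsupp.smul_apply, Finsupp.finset_sum_apply]
    rw [Finset.sum_eq_zero, smul_zero]
    intro B hB
    split_ifs with hdisj
    · rw [Finsupp.single_apply, if_neg, ]
      intro heq
      rw [Prod.mk.injEq] at heq
      obtain ⟨h1, h2⟩ := heq
      rw [Finset.mem_powersetCard] at hB
      have hBT : B ⊆ T := hB.1
      have hcardB : B.card = T.card - S.card := hB.2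
      have hTb : T.card = b := by
        have := congrArg Finset.card h1
        rw [Finset.card_union_of_disjoint hdisj, ico_card hb, hcardB] at this
        omega
      have hSa : S.card = a := by
        have := congrArg Finset.card h2
        rw [Finset.card_sdiff_of_subset hBT, ico_card ha, hcardB] at this
        omega
      have hBIb : B ⊆ ico n 0 b := h1 ▸ Finset.subset_union_right
      have hTIb : T ⊆ ico n 0 b := by
        intro j hj
        by_cases hjB : j ∈ B
        · exact hBIb hjB
        · exact ico_subset (by omega) (h2 ▸ Finset.mem_sdiff.mpr ⟨hj, hjB⟩)
      have hT : T = ico n 0 b :=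
        Finset.eq_of_subset_of_card_le hTIb (by rw [ico_card hb, hTb])
      have hSIa : S = ico n 0 a := by
        have hSsub : S ⊆ ico n 0 b \ B := by
          intro j hj
          exact Finset.mem_sdiff.mpr ⟨h1 ▸ Finset.subset_union_left hj,
            fun hjB => Finset.disjoint_left.mp hdisj hj hjB⟩
        rw [← hT, h2] at hSsub
        exact Finset.eq_of_subset_of_card_le hSsub (by rw [ico_card ha, hSa])
      exact hne ⟨hSIa, hT⟩
    · simp
  · -- equal cards
    rw [if_pos hc, Finsupp.single_apply, if_neg]
    intro heq
    rw [Prod.mk.injEq] at heq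
    obtain ⟨h1, h2⟩ := heq
    have hab : a = b := by
      have := congrArg Finset.card h1
      have := congrArg Finset.card h2
      rw [ico_card hb] at *
      rw [ico_card ha] at *
      omega
    exact hne ⟨by rw [h1, hab], by rw [h2, ← hab]⟩
  · -- NE case
    rw [if_neg (Nat.ne_of_gt hc), if_pos hc, rungNE_single]
    rw [Finsupp.smul_apply, Finsupp.finset_sum_apply]
    rw [Finset.sum_eq_zero, smul_zero]
    intro A hA
    split_ifs with hdisj
    · rw [Finsupp.single_apply, if_neg]
      intro heq
      rw [Prod.mk.injEq] at heq
      obtain ⟨h1, h2⟩ := heq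
      rw [Finset.mem_powersetCard] at hA
      have hAS : A ⊆ S := hA.1
      have hcardA : A.card = T.card := by
        rw [hA.2]; omega
      have hTb : T.card = b := by
        have := congrArg Finset.card h1
        rw [ico_card hb, hcardA] at this
        omega
      have hSa : S.card = a := by
        have := congrArg Finset.card h2
        rw [Finset.card_union_of_disjoint hdisj, Finset.card_sdiff_of_subset hAS, ico_card ha] at this
        omega
      have hSIa : S ⊆ ico n 0 a := by
        intro j hj
        by_cases hjA : j ∈ A
        · exact ico_subset (by omega) (h1 ▸ hjA)
        · exact h2 ▸ Finset.subset_union_left (Finset.mem_sdiff.mpr ⟨hj, hjA⟩)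
      have hS : S = ico n 0 a :=
        Finset.eq_of_subset_of_card_le hSIa (by rw [ico_card ha, hSa])
      have hT : T = ico n 0 b := by
        have hTsub : T ⊆ ico n 0 b := by
          intro j hj
          have hjIa : j ∈ ico n 0 a := h2 ▸ Finset.subset_union_right hj
          by_contra hjb
          have hjA : j ∉ A := fun hjA => hjb (h1 ▸ hjA)
          have : j ∈ S \ A := Finset.mem_sdiff.mpr ⟨hS ▸ hjIa, hjA⟩
          exact Finset.disjoint_left.mp hdisj this hj
        exact Finset.eq_of_subset_of_card_le hTsub (by rw [ico_card hb, hTb])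
      exact hne ⟨hS, hT⟩
    · simp

end Lemmas5

section Lemmas6
open Finsupp LaurentPolynomial
variable {n d : ℕ}

lemma linear_apply_sum {α β : Type} (L : (α →₀ R) →ₗ[R] (β →₀ R)) (v : α →₀ R) (b : β) :
    L v b = v.sum (fun g c => c * (L (Finsupp.single g 1)) b) := by
  classical
  conv_lhs => rw [← Finsupp.sum_single v]
  rw [map_finsuppSum, Finsupp.sum_apply]
  refine Finsupp.sum_congr (fun g hg => ?_)
  rw [← smul_eq_mul, ← Finsupp.smul_apply, ← map_smul, Finsupp.smul_single, smul_eq_mul, mul_one]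

variable {i : ℕ} (h : i + 1 < d)

/-- The reindexing map used by `atPos`. -/
def updPair (f : Fin d → F n) (p : F n × F n) : Fin d → F n :=
  Function.update (Function.update f ⟨i, Nat.lt_of_succ_lt h⟩ p.1) ⟨i + 1, h⟩ p.2

lemma fin_ne : (⟨i, Nat.lt_of_succ_lt h⟩ : Fin d) ≠ ⟨i + 1, h⟩ := by
  simp [Fin.ext_iff]

lemma updPair_fst (f : Fin d → F n) (p : F n × F n) :
    updPair h f p ⟨i, Nat.lt_of_succ_lt h⟩ = p.1 := by
  rw [updPair, Function.update_of_ne (fin_ne h), Function.update_self]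

lemma updPair_snd (f : Fin d → F n) (p : F n × F n) :
    updPair h f p ⟨i + 1, h⟩ = p.2 := by
  rw [updPair, Function.update_self]

lemma updPair_other (f : Fin d → F n) (p : F n × F n) (j : Fin d)
    (hj1 : j ≠ ⟨i, Nat.lt_of_succ_lt h⟩) (hj2 : j ≠ ⟨i + 1, h⟩) :
    updPair h f p j = f j := by
  rw [updPair, Function.update_of_ne hj2, Function.update_of_ne hj1]

lemma updPair_inj (f : Fin d → F n) : Function.Injective (updPair h f) := by
  intro p q hpq
  have h1 := congrFun hpq ⟨i, Nat.lt_of_succ_lt h⟩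
  have h2 := congrFun hpq ⟨i + 1, h⟩
  rw [updPair_fst, updPair_fst] at h1
  rw [updPair_snd, updPair_snd] at h2
  exact Prod.ext h1 h2

lemma atPos_apply (G : Big2 n →ₗ[R] Big2 n) (f : Fin d → F n) :
    atPos n d i G (Finsupp.single f 1)
      = Finsupp.mapDomain (updPair h f)
          (G (Finsupp.single (f ⟨i, Nat.lt_of_succ_lt h⟩, f ⟨i + 1, h⟩) 1)) := by
  rw [atPos, dif_pos h, lift_single]
  rfl

lemma atPos_coeff (G : Big2 n →ₗ[R] Big2 n) (f t : Fin d → F n) :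
    (atPos n d i G (Finsupp.single f 1)) t
      = if ∀ j : Fin d, j ≠ ⟨i, Nat.lt_of_succ_lt h⟩ → j ≠ ⟨i + 1, h⟩ → t j = f j then
          (G (Finsupp.single (f ⟨i, Nat.lt_of_succ_lt h⟩, f ⟨i + 1, h⟩) 1))
            (t ⟨i, Nat.lt_of_succ_lt h⟩, t ⟨i + 1, h⟩)
        else 0 := by
  classical
  rw [atPos_apply h]
  split_ifs with hcond
  · have ht : t = updPair h f (t ⟨i, Nat.lt_of_succ_lt h⟩, t ⟨i + 1, h⟩) := by
      funext j
      by_cases hj1 : j = (⟨i, Nat.lt_of_succ_lt h⟩ : Fin d)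
      · subst hj1; rw [updPair_fst]
      · by_cases hj2 : j = (⟨i + 1, h⟩ : Fin d)
        · subst hj2; rw [updPair_snd]
        · rw [updPair_other h _ _ _ hj1 hj2]; exact hcond j hj1 hj2
    conv_lhs => rw [ht]
    rw [Finsupp.mapDomain_apply (updPair_inj h f)]
  · apply Finsupp.mapDomain_notin_range
    rintro ⟨p, hp⟩
    push_neg at hcond
    obtain ⟨j, hj1, hj2, hj3⟩ := hcond
    exact hj3 (hp ▸ updPair_other h f p j hj1 hj2)

end Lemmas6

section Main
open Finsupp LaurentPolynomial

lemma ladder_main (n d : ℕ) (w : Fin d → ℕ) (hwn : ∀ j, w j ≤ n)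
    (ps : List ℕ) (hps : ∀ i ∈ ps, i + 1 < d) :
    (∃ u : R, IsUM u ∧
      (ps.foldl (fun acc i => atPos n d i (neutralRung n) ∘ₗ acc) LinearMap.id)
        (Finsupp.single (fun j => ico n 0 (w j)) 1)
        = Finsupp.single (fun j => ico n 0 (w (((ps.map (swapPerm d)).prod) j))) u) ∧
    (∀ f : Fin d → Finset (Fin n), (∀ j, (f j).card = w j) →
        f ≠ (fun j => ico n 0 (w j)) →
        ((ps.foldl (fun acc i => atPos n d i (neutralRung n) ∘ₗ acc) LinearMap.id)
          (Finsupp.single f 1)) (fun j => ico n 0 (w (((ps.map (swapPerm d)).prod) j))) = 0) := by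
  classical
  induction ps using List.reverseRecOn with
  | nil =>
      constructor
      · exact ⟨1, isUM_one, by simp⟩
      · intro f hf hne
        simp only [List.foldl_nil, LinearMap.id_coe, id_eq, List.map_nil, List.prod_nil,
          Equiv.Perm.coe_one, Function.comp]
        rw [Finsupp.single_apply, if_neg]
        simpa using hne
  | append_singleton l i IH =>
      have hd : i + 1 < d := hps i (by simp)
      have hpsl : ∀ i' ∈ l, i' + 1 < d := fun i' hi' => hps i' (by simp [hi'])
      obtain ⟨IH1, IH2⟩ := IH hpsl
      set σl := (l.map (swapPerm d)).prod with hσl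
      set Nl := (l.foldl (fun acc i => atPos n d i (neutralRung n) ∘ₗ acc) LinearMap.id)
        with hNl
      have hfold : ((l ++ [i]).foldl (fun acc i => atPos n d i (neutralRung n) ∘ₗ acc)
          LinearMap.id) = atPos n d i (neutralRung n) ∘ₗ Nl := by
        rw [List.foldl_append, List.foldl_cons, List.foldl_nil]
      have hprod : ((l ++ [i]).map (swapPerm d)).prod = σl * swapPerm d i := by
        rw [List.map_append, List.prod_append, List.map_singleton, List.prod_singleton]
      set I : Fin d := ⟨i, Nat.lt_of_succ_lt hd⟩ with hI
      set I1 : Fin d := ⟨i + 1, hd⟩ with hI1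
      have hswap : swapPerm d i = Equiv.swap I I1 := by rw [swapPerm, dif_pos hd]
      set y : Fin d → ℕ := fun j => w (σl j) with hyd
      have hyn : ∀ j, y j ≤ n := fun j => hwn _
      have hy' : ∀ j, w (((l ++ [i]).map (swapPerm d)).prod j) = y (swapPerm d i j) := by
        intro j; rw [hprod]; rfl
      have hyI : y (swapPerm d i I) = y I1 := by rw [hswap, Equiv.swap_apply_left]
      have hyI1 : y (swapPerm d i I1) = y I := by rw [hswap, Equiv.swap_apply_right]
      have hyo : ∀ j, j ≠ I → j ≠ I1 → y (swapPerm d i j) = y j := by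
        intro j h1 h2; rw [hswap, Equiv.swap_apply_of_ne_of_ne h1 h2]
      -- the key coefficient fact, for any pair-subset tuple g:
      have hcoeff : ∀ g : Fin d → Finset (Fin n), g ≠ (fun j => ico n 0 (y j)) →
          (atPos n d i (neutralRung n) (Finsupp.single g 1))
            (fun j => ico n 0 (y (swapPerm d i j))) = 0 := by
        intro g hg
        rw [atPos_coeff hd]
        split_ifs with hcond
        · simp only [← hI, ← hI1, hyI, hyI1]
          apply neutralRung_coeff_zero (y I) (y I1) (hyn I) (hyn I1)
          intro ⟨h1, h2⟩
          apply hg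
          funext j
          by_cases hj1 : j = I
          · subst hj1; exact h1
          · by_cases hj2 : j = I1
            · subst hj2; exact h2
            · rw [← hcond j hj1 hj2, hyo j hj1 hj2]
        · rfl
      constructor
      · -- part 1
        obtain ⟨u, hu, hNtop⟩ := IH1
        obtain ⟨u2, hu2, hnr⟩ := neutralRung_top (y I) (y I1) (hyn I) (hyn I1)
        refine ⟨u * u2, isUM_mul hu hu2, ?_⟩
        · rw [hfold, LinearMap.comp_apply, hNtop]
          have : (Finsupp.single (fun j => ico n 0 (y j)) u : BigD n d)
              = u • Finsupp.single (fun j => ico n 0 (y j)) 1 := by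
            rw [Finsupp.smul_single, smul_eq_mul, mul_one]
          rw [this, map_smul, atPos_apply hd]
          rw [hnr, Finsupp.mapDomain_single, Finsupp.smul_single, smul_eq_mul]
          congr 1
          funext j
          rw [hy']
          by_cases hj1 : j = I
          · subst hj1; rw [updPair_fst, hyI]
          · by_cases hj2 : j = I1
            · subst hj2; rw [updPair_snd, hyI1]
            · rw [updPair_other hd _ _ _ hj1 hj2, hyo j hj1 hj2]
      · -- part 2
        intro f hf hne
        rw [hfold, LinearMap.comp_apply]
        have htop' : (fun j => ico n 0 (w (((l ++ [i]).map (swapPerm d)).prod j)))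
            = fun j => ico n 0 (y (swapPerm d i j)) := by
          funext j; rw [hy']
        rw [htop', linear_apply_sum, Finsupp.sum]
        apply Finset.sum_eq_zero
        intro g hg
        by_cases hgy : g = (fun j => ico n 0 (y j))
        · subst hgy
          rw [IH2 f hf hne, zero_mul]
        · rw [hcoeff g hgy, mul_zero]

end Main

/-- Let `N` be any composition of maps `id ⊗ ⋯ ⊗ (neutral rung) ⊗ ⋯ ⊗ id`, applied at the
list of positions `ps`, and let `y = w ∘ σ` be the corresponding permutation of the labels
`w` (with `1 ≤ w_j ≤ n−1`). Then:
(1) `N(x_{[1,w₁]} ⊗ ⋯ ⊗ x_{[1,w_d]}) = ε q^z · x_{[1,y₁]} ⊗ ⋯ ⊗ x_{[1,y_d]}` for a sign `ε`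
and `z ∈ ℤ`; and
(2) for every basis element `x_{S₁} ⊗ ⋯ ⊗ x_{S_d}` of the source (`|S_j| = w_j`) other than
the top one, the coefficient of `x_{[1,y₁]} ⊗ ⋯ ⊗ x_{[1,y_d]}` in its image is zero. -/
theorem neutral_ladder_on_top_basis (n d : ℕ) (hn : 2 ≤ n)
    (w : Fin d → ℕ) (hw : ∀ j, 1 ≤ w j ∧ w j ≤ n - 1)
    (ps : List ℕ) (hps : ∀ i ∈ ps, i + 1 < d)
    (N : BigD n d →ₗ[R] BigD n d)
    (hN : N = ps.foldl (fun acc i => atPos n d i (neutralRung n) ∘ₗ acc) LinearMap.id)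
    (yv : Fin d → ℕ)
    (hy : yv = fun j => w (((ps.map (swapPerm d)).prod) j)) :
    (∃ ε z : ℤ, (ε = 1 ∨ ε = -1) ∧
        N (Finsupp.single (fun j => ico n 0 (w j)) 1)
          = Finsupp.single (fun j => ico n 0 (yv j))
              (LaurentPolynomial.C ε * LaurentPolynomial.T z)) ∧
    (∀ f : Fin d → Finset (Fin n), (∀ j, (f j).card = w j) →
        f ≠ (fun j => ico n 0 (w j)) →
        (N (Finsupp.single f 1)) (fun j => ico n 0 (yv j)) = 0) := by
  subst hN hy
  have hwn : ∀ j, w j ≤ n := fun j => le_trans (hw j).2 (Nat.sub_le n 1)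
  obtain ⟨⟨u, ⟨ε, z, hε, hu⟩, h1⟩, h2⟩ := ladder_main n d w hwn ps hps
  exact ⟨⟨ε, z, hε, hu ▸ h1⟩, h2⟩
end
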